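/- arXiv:1203.5626 — 4 statements merged into one kernel-verified Lean document; each statement's English description precedes it below -/
import Mathlib

section
/- For an absolutely continuous random vector Y in ℝ^p, directional symmetry of Y is equivalent to the condition Pr[Y ∈ C] = Pr[-Y ∈ C] for every closed convex cone C ⊆ ℝ^p. -/
open MeasureTheory ProbabilityTheory Metric
open scoped RealInnerProductSpace ENNReal

lemma mem_cone_iff_normalize {E : Type*} [NormedAddCommGroup E] [NormedSpace ℝ E]
    {C : Set E} (hscale : ∀ r : ℝ, 0 ≤ r → ∀ x ∈ C, r • x ∈ C) (x : E) :
    x ∈ C ↔ ‖x‖⁻¹ • x ∈ C := by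
  rcases eq_or_ne x 0 with rfl | hx
  · simp
  · constructor
    · intro h; exact hscale _ (inv_nonneg.2 (norm_nonneg x)) x h
    · intro h
      have h2 := hscale ‖x‖ (norm_nonneg x) _ h
      rwa [smul_smul, mul_inv_cancel₀ (norm_ne_zero_iff.2 hx), one_smul] at h2

/-- "Ice-cream cone" with axis `d` and aperture parameter `c`. -/
def coneCap {E : Type*} [NormedAddCommGroup E] [InnerProductSpace ℝ E] (d : E) (c : ℝ) : Set E :=
  {x | c * ‖x‖ ≤ ⟪d, x⟫}

lemma isClosed_coneCap {E : Type*} [NormedAddCommGroup E] [InnerProductSpace ℝ E] (d : E) (c : ℝ) :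
    IsClosed (coneCap d c) :=
  isClosed_le (continuous_const.mul continuous_norm) (continuous_const.inner continuous_id)

lemma convex_coneCap {E : Type*} [NormedAddCommGroup E] [InnerProductSpace ℝ E] (d : E) {c : ℝ}
    (hc : 0 ≤ c) : Convex ℝ (coneCap d c) := by
  intro x hx y hy a b ha hb hab
  simp only [coneCap, Set.mem_setOf_eq] at hx hy ⊢
  have h1 : ‖a • x + b • y‖ ≤ a * ‖x‖ + b * ‖y‖ := by
    calc ‖a • x + b • y‖ ≤ ‖a • x‖ + ‖b • y‖ := norm_add_le _ _
    _ = a * ‖x‖ + b * ‖y‖ := by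
        rw [norm_smul, norm_smul, Real.norm_of_nonneg ha, Real.norm_of_nonneg hb]
  have h2 : ⟪d, a • x + b • y⟫ = a * ⟪d, x⟫ + b * ⟪d, y⟫ := by
    rw [inner_add_right, real_inner_smul_right, real_inner_smul_right]
  rw [h2]
  nlinarith [mul_le_mul_of_nonneg_left hx ha, mul_le_mul_of_nonneg_left hy hb,
    mul_le_mul_of_nonneg_left h1 hc, norm_nonneg x, norm_nonneg y]

lemma smul_mem_coneCap {E : Type*} [NormedAddCommGroup E] [InnerProductSpace ℝ E] (d : E) (c : ℝ)
    (r : ℝ) (hr : 0 ≤ r) (x : E) (hx : x ∈ coneCap d c) : r • x ∈ coneCap d c := by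
  simp only [coneCap, Set.mem_setOf_eq] at hx ⊢
  rw [norm_smul, real_inner_smul_right, Real.norm_of_nonneg hr]
  nlinarith

lemma coneCap_sphere_iff {E : Type*} [NormedAddCommGroup E] [InnerProductSpace ℝ E] {d x : E}
    (hd : ‖d‖ = 1) (hx : ‖x‖ = 1) {q : ℝ} (hq : 0 ≤ q) :
    x ∈ coneCap d (1 - q ^ 2 / 2) ↔ dist x d ≤ q := by
  have hns : ‖x - d‖ ^ 2 = 2 - 2 * ⟪d, x⟫ := by
    rw [norm_sub_sq_real, hx, hd, real_inner_comm]; ring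
  simp only [coneCap, Set.mem_setOf_eq, dist_eq_norm, hx, mul_one]
  constructor
  · intro h
    have hsq : ‖x - d‖ ^ 2 ≤ q ^ 2 := by rw [hns]; linarith
    exact le_of_pow_le_pow_left₀ two_ne_zero hq hsq
  · intro h
    have hsq : ‖x - d‖ ^ 2 ≤ q ^ 2 := pow_le_pow_left₀ (norm_nonneg _) h 2
    rw [hns] at hsq; linarith

/-- The Borel σ-algebra on a subset of the unit sphere is generated by traces of
closed convex cones. -/
lemma sphere_generateFrom {p : ℕ} (S : Set (EuclideanSpace ℝ (Fin p)))
    (hS1 : ∀ x ∈ S, ‖x‖ = 1) (PS : Set (Set ↥S))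
    (hPS : PS = {t | ∃ C : Set (EuclideanSpace ℝ (Fin p)), IsClosed C ∧ Convex ℝ C ∧
      (∀ r : ℝ, 0 ≤ r → ∀ x ∈ C, r • x ∈ C) ∧ t = Subtype.val ⁻¹' C}) :
    (inferInstance : MeasurableSpace ↥S) = MeasurableSpace.generateFrom PS := by
  classical
  have hcap : ∀ d : ↥S, ∀ q : ℝ, 0 < q → q ≤ 1 →
      (Subtype.val ⁻¹' Metric.closedBall (d : EuclideanSpace ℝ (Fin p)) q) ∈ PS := by
    intro d q hq0 hq1
    rw [hPS]
    refine ⟨coneCap (d : EuclideanSpace ℝ (Fin p)) (1 - q ^ 2 / 2), isClosed_coneCap _ _,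
      convex_coneCap _ (by nlinarith), smul_mem_coneCap _ _, ?_⟩
    ext x
    have hd1 : ‖(d : EuclideanSpace ℝ (Fin p))‖ = 1 := hS1 _ d.2
    have hx1 : ‖(x : EuclideanSpace ℝ (Fin p))‖ = 1 := hS1 _ x.2
    simp only [Set.mem_preimage, Metric.mem_closedBall]
    exact (coneCap_sphere_iff hd1 hx1 hq0.le).symm
  have key : ∀ V : Set ↥S, IsOpen V → MeasurableSet[MeasurableSpace.generateFrom PS] V := by
    intro V hV
    obtain ⟨D, hDc, hDd⟩ := TopologicalSpace.exists_countable_dense ↥S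
    have hcover : V = ⋃ (d ∈ D) (q : ℚ) (_ : 0 < (q : ℝ)) (_ : (q : ℝ) ≤ 1)
        (_ : (Subtype.val ⁻¹' Metric.closedBall (d : EuclideanSpace ℝ (Fin p)) (q : ℝ)) ⊆ V),
        Subtype.val ⁻¹' Metric.closedBall (d : EuclideanSpace ℝ (Fin p)) (q : ℝ) := by
      apply Set.Subset.antisymm
      · intro x hx
        obtain ⟨ε, hε, hball⟩ := Metric.isOpen_iff.1 hV x hx
        have hmin : (0 : ℝ) < min (ε / 3) 1 := lt_min (by linarith) one_pos
        obtain ⟨q, hq0, hqlt⟩ := exists_rat_btwn hmin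
        have hq0' : (0 : ℝ) < q := by exact_mod_cast hq0
        have hq1 : (q : ℝ) ≤ 1 := le_of_lt (lt_of_lt_of_le hqlt (min_le_right _ _))
        have hqε : (q : ℝ) < ε / 3 := lt_of_lt_of_le hqlt (min_le_left _ _)
        obtain ⟨d, hdD, hdist⟩ := hDd.exists_dist_lt x hq0'
        have hxd : dist (x : EuclideanSpace ℝ (Fin p)) (d : EuclideanSpace ℝ (Fin p)) ≤ q := by
          rw [← Subtype.dist_eq]; exact hdist.le
        have hsub : (Subtype.val ⁻¹' Metric.closedBall (d : EuclideanSpace ℝ (Fin p)) (q : ℝ)) ⊆ V := by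
          intro y hy
          apply hball
          rw [Metric.mem_ball, Subtype.dist_eq]
          calc dist (y : EuclideanSpace ℝ (Fin p)) (x : EuclideanSpace ℝ (Fin p))
              ≤ dist (y : EuclideanSpace ℝ (Fin p)) (d : EuclideanSpace ℝ (Fin p)) +
                dist (d : EuclideanSpace ℝ (Fin p)) (x : EuclideanSpace ℝ (Fin p)) :=
                dist_triangle _ _ _
            _ ≤ q + q := by
                refine add_le_add hy ?_
                rw [dist_comm]; exact hxd
            _ < ε := by linarith
        simp only [Set.mem_iUnion]
        exact ⟨d, hdD, q, hq0', hq1, hsub, by rw [Set.mem_preimage, Metric.mem_closedBall]; exact hxd⟩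
      · simp only [Set.iUnion_subset_iff]
        intro d hd q hq0 hq1 hsub
        exact hsub
    rw [hcover]
    refine MeasurableSet.biUnion hDc fun d hd => ?_
    refine MeasurableSet.iUnion fun q => ?_
    refine MeasurableSet.iUnion fun hq0 => ?_
    refine MeasurableSet.iUnion fun hq1 => ?_
    refine MeasurableSet.iUnion fun hsub => ?_
    exact MeasurableSpace.measurableSet_generateFrom (hcap d q hq0 hq1)
  refine le_antisymm ?_ ?_
  · have h1 : (inferInstance : MeasurableSpace ↥S) =
        MeasurableSpace.comap Subtype.val (borel (EuclideanSpace ℝ (Fin p))) := by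
      rw [← BorelSpace.measurable_eq (α := EuclideanSpace ℝ (Fin p))]
      rfl
    rw [h1, borel, MeasurableSpace.comap_generateFrom]
    refine MeasurableSpace.generateFrom_le ?_
    rintro _ ⟨U, (hU : IsOpen U), rfl⟩
    exact key _ (hU.preimage continuous_subtype_val)
  · refine MeasurableSpace.generateFrom_le ?_
    rintro t ht
    rw [hPS] at ht
    obtain ⟨C, hCc, -, -, rfl⟩ := ht
    exact hCc.measurableSet.preimage measurable_subtype_coe

/-- Two probability measures concentrated on a subset of the unit sphere that agree on
all closed convex cones are equal. -/
lemma ext_of_cones {p : ℕ} (S : Set (EuclideanSpace ℝ (Fin p))) (hSm : MeasurableSet S)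
    (hS1 : ∀ x ∈ S, ‖x‖ = 1)
    (ρ τ : Measure (EuclideanSpace ℝ (Fin p)))
    [IsProbabilityMeasure ρ] [IsProbabilityMeasure τ]
    (hρS : ρ Sᶜ = 0) (hτS : τ Sᶜ = 0)
    (hcone : ∀ C : Set (EuclideanSpace ℝ (Fin p)), IsClosed C → Convex ℝ C →
      (∀ r : ℝ, 0 ≤ r → ∀ x ∈ C, r • x ∈ C) → ρ C = τ C) :
    ρ = τ := by
  classical
  set PS : Set (Set ↥S) := {t | ∃ C : Set (EuclideanSpace ℝ (Fin p)), IsClosed C ∧ Convex ℝ C ∧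
      (∀ r : ℝ, 0 ≤ r → ∀ x ∈ C, r • x ∈ C) ∧ t = Subtype.val ⁻¹' C} with hPS
  have hgen : (inferInstance : MeasurableSpace ↥S) = MeasurableSpace.generateFrom PS :=
    sphere_generateFrom S hS1 PS hPS
  have hPi : IsPiSystem PS := by
    rw [hPS]
    rintro _ ⟨C₁, h₁c, h₁v, h₁s, rfl⟩ _ ⟨C₂, h₂c, h₂v, h₂s, rfl⟩ _
    exact ⟨C₁ ∩ C₂, h₁c.inter h₂c, h₁v.inter h₂v,
      fun r hr x hx => ⟨h₁s r hr x hx.1, h₂s r hr x hx.2⟩, (Set.preimage_inter).symm⟩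
  have hemb : MeasurableEmbedding ((↑) : ↥S → EuclideanSpace ℝ (Fin p)) :=
    MeasurableEmbedding.subtype_coe hSm
  set ρ' : Measure ↥S := Measure.comap Subtype.val ρ with hρ'
  set τ' : Measure ↥S := Measure.comap Subtype.val τ with hτ'
  have hρ'app : ∀ t : Set ↥S, ρ' t = ρ (Subtype.val '' t) := fun t => hemb.comap_apply ρ t
  have hτ'app : ∀ t : Set ↥S, τ' t = τ (Subtype.val '' t) := fun t => hemb.comap_apply τ t
  haveI : IsFiniteMeasure ρ' := by
    constructor
    rw [hρ'app]
    exact lt_of_le_of_lt (measure_mono (Set.subset_univ _)) (measure_lt_top ρ Set.univ)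
  have hSfullρ : ρ S = 1 := by
    rw [← Set.univ_inter S, measure_inter_conull hρS, measure_univ]
  have hSfullτ : τ S = 1 := by
    rw [← Set.univ_inter S, measure_inter_conull hτS, measure_univ]
  have huniv : ρ' Set.univ = τ' Set.univ := by
    rw [hρ'app, hτ'app, Set.image_univ, Subtype.range_coe, hSfullρ, hSfullτ]
  have hagree : ∀ t ∈ PS, ρ' t = τ' t := by
    rw [hPS]
    rintro _ ⟨C, hCc, hCv, hCs, rfl⟩
    rw [hρ'app, hτ'app, Subtype.image_preimage_coe,
      Set.inter_comm S C, measure_inter_conull hρS, measure_inter_conull hτS]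
    exact hcone C hCc hCv hCs
  have hmain : ρ' = τ' := ext_of_generate_finite PS hgen hPi hagree huniv
  ext A hA
  have h1 : ρ (A ∩ S) = τ (A ∩ S) := by
    have := congrArg (fun μ : Measure ↥S => μ (Subtype.val ⁻¹' A)) hmain
    simpa [hρ'app, hτ'app, Subtype.image_preimage_coe, Set.inter_comm] using this
  calc ρ A = ρ (A ∩ S) := (measure_inter_conull hρS).symm
    _ = τ (A ∩ S) := h1
    _ = τ A := measure_inter_conull hτS

theorem reverse_stein_helper {p : ℕ} {Ω : Type*} [MeasureSpace Ω]
    [IsProbabilityMeasure (ℙ : Measure Ω)]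
    (Y Z : Ω → EuclideanSpace ℝ (Fin p)) (hY : Measurable Y)
    (hZdef : ∀ ω, Z ω = ‖Y ω‖⁻¹ • Y ω)
    (habs : Measure.map Y ℙ ≪ (volume : Measure (EuclideanSpace ℝ (Fin p)))) :
    (Measure.map Z (ℙ : Measure Ω) = Measure.map (fun ω => -Z ω) (ℙ : Measure Ω))
    ↔ ∀ C : Set (EuclideanSpace ℝ (Fin p)), IsClosed C → Convex ℝ C →
        (∀ r : ℝ, 0 ≤ r → ∀ x ∈ C, r • x ∈ C) →
        (ℙ : Measure Ω) {ω | Y ω ∈ C} = (ℙ : Measure Ω) {ω | -Y ω ∈ C} := by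
  classical
  have hZ : Measurable Z := by
    rw [show Z = fun ω => ‖Y ω‖⁻¹ • Y ω from funext hZdef]
    exact (hY.norm.inv).smul hY
  have hZneg : Measurable fun ω => -Z ω := hZ.neg
  have e1 : ∀ C : Set (EuclideanSpace ℝ (Fin p)), (∀ r : ℝ, 0 ≤ r → ∀ x ∈ C, r • x ∈ C) →
      Z ⁻¹' C = {ω | Y ω ∈ C} := by
    intro C hscale
    ext ω
    simp only [Set.mem_preimage, Set.mem_setOf_eq, hZdef ω]
    exact (mem_cone_iff_normalize hscale (Y ω)).symm
  have e2 : ∀ C : Set (EuclideanSpace ℝ (Fin p)), (∀ r : ℝ, 0 ≤ r → ∀ x ∈ C, r • x ∈ C) →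
      (fun ω => -Z ω) ⁻¹' C = {ω | -Y ω ∈ C} := by
    intro C hscale
    ext ω
    have hnz : -Z ω = ‖-Y ω‖⁻¹ • (-Y ω) := by rw [hZdef ω, norm_neg, smul_neg]
    simp only [Set.mem_preimage, Set.mem_setOf_eq, hnz]
    exact (mem_cone_iff_normalize hscale (-Y ω)).symm
  constructor
  · intro h C hCc hCconv hscale
    have hCm : MeasurableSet C := hCc.measurableSet
    rw [← e1 C hscale, ← e2 C hscale, ← Measure.map_apply hZ hCm,
      ← Measure.map_apply hZneg hCm, h]
  · intro h
    rcases Nat.eq_zero_or_pos p with hp | hp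
    · subst hp
      have : (fun ω => -Z ω) = Z := funext fun ω => Subsingleton.elim _ _
      rw [this]
    haveI : Nonempty (Fin p) := ⟨⟨0, hp⟩⟩
    haveI : Nontrivial (EuclideanSpace ℝ (Fin p)) := inferInstance
    have h0 : (ℙ : Measure Ω) {ω | Y ω = 0} = 0 := by
      have hvol : (volume : Measure (EuclideanSpace ℝ (Fin p))) {0} = 0 := measure_singleton 0
      have h1 := habs hvol
      rwa [Measure.map_apply hY (measurableSet_singleton 0)] at h1
    set S : Set (EuclideanSpace ℝ (Fin p)) := Metric.sphere 0 1 with hSdef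
    have hSm : MeasurableSet S := Metric.isClosed_sphere.measurableSet
    have hS1 : ∀ x ∈ S, ‖x‖ = 1 := fun x hx => mem_sphere_zero_iff_norm.1 hx
    have hZS : ∀ ω, Y ω ≠ 0 → Z ω ∈ S := by
      intro ω hω
      rw [hSdef, mem_sphere_zero_iff_norm, hZdef ω, norm_smul, norm_inv, norm_norm,
        inv_mul_cancel₀ (norm_ne_zero_iff.2 hω)]
    have hρS : Measure.map Z ℙ Sᶜ = 0 := by
      rw [Measure.map_apply hZ hSm.compl]
      refine measure_mono_null ?_ h0
      intro ω hω
      by_contra hne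
      exact hω (hZS ω hne)
    have hτS : Measure.map (fun ω => -Z ω) ℙ Sᶜ = 0 := by
      rw [Measure.map_apply hZneg hSm.compl]
      refine measure_mono_null ?_ h0
      intro ω hω
      by_contra hne
      refine hω ?_
      show -Z ω ∈ S
      rw [hSdef, mem_sphere_zero_iff_norm, norm_neg]
      exact mem_sphere_zero_iff_norm.1 (hZS ω hne)
    haveI : IsProbabilityMeasure (Measure.map Z (ℙ : Measure Ω)) :=
      Measure.isProbabilityMeasure_map hZ.aemeasurable
    haveI : IsProbabilityMeasure (Measure.map (fun ω => -Z ω) (ℙ : Measure Ω)) :=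
      Measure.isProbabilityMeasure_map hZneg.aemeasurable
    refine ext_of_cones S hSm hS1 _ _ hρS hτS ?_
    intro C hCc hCv hCs
    have hCm : MeasurableSet C := hCc.measurableSet
    rw [Measure.map_apply hZ hCm, Measure.map_apply hZneg hCm, e1 C hCs, e2 C hCs]
    exact h C hCc hCv hCs

/-- For an absolutely continuous random vector `Y` in `ℝ^p`,
directional symmetry of `Y` (i.e. `Y/‖Y‖ ≐ -Y/‖Y‖`) is equivalent to
`Pr[Y ∈ C] = Pr[-Y ∈ C]` for every closed convex cone `C ⊆ ℝ^p`. -/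
theorem reverse_stein_stmt2 {p : ℕ} {Ω : Type*} [MeasureSpace Ω]
    [IsProbabilityMeasure (ℙ : Measure Ω)]
    (Y : Ω → EuclideanSpace ℝ (Fin p)) (hY : Measurable Y)
    (habs : Measure.map Y ℙ ≪ volume) :
    (Measure.map (fun ω => ‖Y ω‖⁻¹ • Y ω) (ℙ : Measure Ω)
       = Measure.map (fun ω => -(‖Y ω‖⁻¹ • Y ω)) (ℙ : Measure Ω))
    ↔ ∀ C : Set (EuclideanSpace ℝ (Fin p)), IsClosed C → Convex ℝ C →
        (∀ r : ℝ, 0 ≤ r → ∀ x ∈ C, r • x ∈ C) →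
        (ℙ : Measure Ω) {ω | Y ω ∈ C} = (ℙ : Measure Ω) {ω | -Y ω ∈ C} := by
  exact reverse_stein_helper Y (fun ω => ‖Y ω‖⁻¹ • Y ω) hY (fun ω => rfl) habs
end

section
/- Fix δ, δ₀, X ∈ ℝ^p and for γ ∈ [0,1] define the shrinkage estimate δ̂_γ = γ(X - δ₀) + δ₀. There exists γ ∈ [0,1) with ‖δ̂_γ - δ‖ < ‖X - δ‖ if and only if ‖X - (δ₀+δ)/2‖ > ‖δ - δ₀‖/2, i.e., iff X lies outside the closed ball of radius ‖δ - δ₀‖/2 centered at the midpoint of δ₀ and δ. -/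
open Metric

/-- For the shrinkage estimate `δ̂_γ = γ(X - δ₀) + δ₀`, some `γ ∈ [0,1)`
strictly reduces the distance to `δ` iff `X` lies outside the closed ball of radius
`‖δ - δ₀‖/2` centered at the midpoint `(δ₀ + δ)/2`. -/
theorem reverse_stein_stmt5 {p : ℕ} (X δ δ₀ : EuclideanSpace ℝ (Fin p)) :
    (∃ γ ∈ Set.Ico (0 : ℝ) 1, ‖γ • (X - δ₀) + δ₀ - δ‖ < ‖X - δ‖)
      ↔ ‖X - (2 : ℝ)⁻¹ • (δ₀ + δ)‖ > ‖δ - δ₀‖ / 2 := by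
  set u := X - δ₀ with hu
  set v := δ - δ₀ with hv
  have h1 : ∀ γ : ℝ, γ • u + δ₀ - δ = γ • u - v := by
    intro γ; rw [hv]; abel
  have h2 : X - δ = u - v := by rw [hu, hv]; abel
  have h3 : X - (2:ℝ)⁻¹ • (δ₀ + δ) = u - (2:ℝ)⁻¹ • v := by
    rw [hu, hv]; module
  clear_value u v
  set a : ℝ := ‖u‖ ^ 2 with ha
  set t : ℝ := inner ℝ u v with ht
  clear_value a t
  have ha0 : 0 ≤ a := by rw [ha]; positivity
  have hexp : ∀ γ : ℝ, ‖γ • u - v‖ ^ 2 = γ ^ 2 * a - 2 * γ * t + ‖v‖ ^ 2 := by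
    intro γ
    rw [norm_sub_sq_real, norm_smul, real_inner_smul_left, ha, ht,
      Real.norm_eq_abs, mul_pow, sq_abs]
    ring
  have hexp1 : ‖u - v‖ ^ 2 = a - 2 * t + ‖v‖ ^ 2 := by
    have := hexp 1; simpa using this
  have hexp2 : ‖u - (2:ℝ)⁻¹ • v‖ ^ 2 = a - t + (2:ℝ)⁻¹ ^ 2 * ‖v‖ ^ 2 := by
    rw [norm_sub_sq_real, norm_smul, real_inner_smul_right, ← ha, ← ht,
      Real.norm_eq_abs, mul_pow, sq_abs]
    ring
  have hcs : |t| ≤ ‖u‖ * ‖v‖ := by rw [ht]; exact abs_real_inner_le_norm u v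
  have hsq : ∀ x y : ℝ, 0 ≤ x → 0 ≤ y → (x < y ↔ x ^ 2 < y ^ 2) := by
    intro x y hx hy
    constructor <;> intro h <;> nlinarith
  constructor
  · rintro ⟨γ, ⟨hγ0, hγ1⟩, hlt⟩
    rw [h1, h2] at hlt
    have hlt2 : ‖γ • u - v‖ ^ 2 < ‖u - v‖ ^ 2 :=
      (hsq _ _ (norm_nonneg _) (norm_nonneg _)).mp hlt
    rw [hexp, hexp1] at hlt2
    have hintA : (0:ℝ) ≤ (1 - γ) * a := mul_nonneg (by linarith) ha0
    have hintB : (0:ℝ) < (1 - γ) * (1 - γ) := mul_pos (by linarith) (by linarith)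
    have hta : t < a := by nlinarith
    rw [gt_iff_lt, h3]
    refine (hsq (‖v‖ / 2) _ (by positivity) (norm_nonneg _)).mpr ?_
    rw [hexp2]
    have hr : (‖v‖ / 2) ^ 2 = (2:ℝ)⁻¹ ^ 2 * ‖v‖ ^ 2 := by ring
    rw [hr]; linarith
  · intro hgt
    rw [gt_iff_lt, h3] at hgt
    have hgt2 := (hsq (‖v‖ / 2) _ (by positivity) (norm_nonneg _)).mp hgt
    rw [hexp2] at hgt2
    have hr : (‖v‖ / 2) ^ 2 = (2:ℝ)⁻¹ ^ 2 * ‖v‖ ^ 2 := by ring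
    rw [hr] at hgt2
    have hta : t < a := by linarith
    have hapos : 0 < a := by
      rcases lt_or_eq_of_le ha0 with h | h
      · exact h
      · exfalso
        have hsq0 : ‖u‖ ^ 2 = 0 := by rw [← ha, ← h]
        have hu0 : ‖u‖ = 0 := by
          exact pow_eq_zero_iff (two_ne_zero) |>.mp hsq0
        have hle : |t| ≤ 0 := by
          calc |t| ≤ ‖u‖ * ‖v‖ := hcs
            _ = 0 := by rw [hu0]; ring
        have ht0 : t = 0 := abs_eq_zero.mp (le_antisymm hle (abs_nonneg t))
        rw [ht0, ← h] at hta
        exact lt_irrefl 0 hta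
    refine ⟨max 0 (t / a), ⟨le_max_left _ _, max_lt one_pos ((div_lt_one hapos).mpr hta)⟩, ?_⟩
    set γ := max 0 (t / a) with hγ
    rw [h1, h2]
    refine (hsq _ _ (norm_nonneg _) (norm_nonneg _)).mpr ?_
    rw [hexp, hexp1]
    have hγ0 : 0 ≤ γ := le_max_left _ _
    have hγ1 : γ < 1 := max_lt one_pos ((div_lt_one hapos).mpr hta)
    have hγt : t ≤ γ * a := by
      have h' : t / a ≤ γ := le_max_right _ _
      calc t = (t / a) * a := by field_simp
        _ ≤ γ * a := mul_le_mul_of_nonneg_right h' ha0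
    clear_value γ
    have k1 : (0:ℝ) < (1 - γ) * ((a - t) + (γ * a - t)) :=
      mul_pos (by linarith) (by linarith)
    have k2 : (1 - γ) * ((a - t) + (γ * a - t))
        = (a - 2 * t + ‖v‖ ^ 2) - (γ ^ 2 * a - 2 * γ * t + ‖v‖ ^ 2) := by ring
    linarith
end

section
/- For p ≥ 3, fixed δ ≠ δ₀ ∈ ℝ^p, σ > 0, and X absolutely continuous with the event sets having positive probability where they differ: Pr[‖δ̂⁺_JS(X;δ₀) - δ‖ < ‖X - δ‖] ≥ Pr[‖δ̂_JS(X;δ₀) - δ‖ < ‖X - δ‖], with strict inequality whenever Pr[X ∈ (B₁ \ B₂) \ D] > 0, where B₁ is the ball of radius σ√(p-2) about δ₀, B₂ the ball of radius ‖δ₀-δ‖ about δ, and D the improvement set of δ̂_JS. -/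
open MeasureTheory ProbabilityTheory Metric

/-- The (untruncated) James–Stein estimator. -/
noncomputable def jsEst {p : ℕ} (σ : ℝ) (x δ₀ : EuclideanSpace ℝ (Fin p)) :
    EuclideanSpace ℝ (Fin p) :=
  (1 - σ ^ 2 * ((p : ℝ) - 2) / ‖x - δ₀‖ ^ 2) • (x - δ₀) + δ₀

/-- The plus-rule (positive-part) James–Stein estimator. -/
noncomputable def jsPlus {p : ℕ} (σ : ℝ) (x δ₀ : EuclideanSpace ℝ (Fin p)) :
    EuclideanSpace ℝ (Fin p) :=
  (max (1 - σ ^ 2 * ((p : ℝ) - 2) / ‖x - δ₀‖ ^ 2) 0) • (x - δ₀) + δ₀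


lemma key_incl {p : ℕ} (σ : ℝ) (x δ δ₀ : EuclideanSpace ℝ (Fin p))
    (h : ‖jsEst σ x δ₀ - δ‖ < ‖x - δ‖) : ‖jsPlus σ x δ₀ - δ‖ < ‖x - δ‖ := by
  set c : ℝ := 1 - σ ^ 2 * ((p : ℝ) - 2) / ‖x - δ₀‖ ^ 2 with hc
  rcases le_or_gt 0 c with hc0 | hc0
  · rwa [jsPlus, max_eq_left hc0]
  · have hu : (0:ℝ) < ‖x - δ₀‖ := by
      rcases eq_or_lt_of_le (norm_nonneg (x - δ₀)) with h0 | h0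
      · exfalso; rw [hc, ← h0] at hc0; norm_num at hc0
      · exact h0
    rw [jsPlus, max_eq_right hc0.le, zero_smul, zero_add]
    set u := x - δ₀ with hudef
    set v := δ₀ - δ with hvdef
    have hxd : x - δ = u + v := by simp [hudef, hvdef]
    have hje : jsEst σ x δ₀ - δ = c • u + v := by
      simp [jsEst, hudef, hvdef, hc]; abel
    rw [hxd] at h ⊢
    rw [hje] at h
    have h2 : ‖c • u + v‖ ^ 2 < ‖u + v‖ ^ 2 := by
      exact pow_lt_pow_left₀ h (norm_nonneg _) two_ne_zero
    have e1 : ‖c • u + v‖ ^ 2 = c^2 * ‖u‖^2 + 2 * (c * inner ℝ u v) + ‖v‖^2 := by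
      rw [norm_add_sq_real, norm_smul, real_inner_smul_left, mul_pow, Real.norm_eq_abs, sq_abs]
    have e2 : ‖u + v‖ ^ 2 = ‖u‖^2 + 2 * inner ℝ u v + ‖v‖^2 := norm_add_sq_real u v
    have hgoal : ‖v‖ ^ 2 < ‖u + v‖ ^ 2 := by
      rw [e2]
      rw [e1, e2] at h2
      nlinarith [sq_nonneg ‖u‖, hu, hc0]
    exact lt_of_pow_lt_pow_left₀ 2 (norm_nonneg _) hgoal

lemma ball_incl {p : ℕ} (σ : ℝ) (hσ : 0 < σ) (hp : 3 ≤ p)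
    (x δ δ₀ : EuclideanSpace ℝ (Fin p))
    (hx : x ∈ ball δ₀ (σ * Real.sqrt ((p : ℝ) - 2)) \ closedBall δ ‖δ₀ - δ‖) :
    ‖jsPlus σ x δ₀ - δ‖ < ‖x - δ‖ := by
  obtain ⟨h1, h2⟩ := hx
  rw [mem_ball, dist_eq_norm] at h1
  rw [mem_closedBall, dist_eq_norm, not_le] at h2
  have hp2 : (0:ℝ) ≤ (p:ℝ) - 2 := by
    have : (3:ℝ) ≤ (p:ℝ) := by exact_mod_cast hp
    linarith
  have hu : (0:ℝ) < ‖x - δ₀‖ := by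
    rcases eq_or_lt_of_le (norm_nonneg (x - δ₀)) with h0 | h0
    · exfalso
      have : x = δ₀ := by
        have := (norm_eq_zero.mp h0.symm)
        exact sub_eq_zero.mp this
      rw [this] at h2
      exact absurd h2 (lt_irrefl _)
    · exact h0
  have husq : ‖x - δ₀‖ ^ 2 < σ ^ 2 * ((p:ℝ) - 2) := by
    have := pow_lt_pow_left₀ h1 (norm_nonneg _) two_ne_zero
    calc ‖x - δ₀‖ ^ 2 < (σ * Real.sqrt ((p:ℝ) - 2)) ^ 2 := this
      _ = σ ^ 2 * ((p:ℝ) - 2) := by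
          rw [mul_pow, Real.sq_sqrt hp2]
  have hc0 : 1 - σ ^ 2 * ((p : ℝ) - 2) / ‖x - δ₀‖ ^ 2 ≤ 0 := by
    have : (1:ℝ) < σ ^ 2 * ((p:ℝ) - 2) / ‖x - δ₀‖ ^ 2 := by
      rw [lt_div_iff₀ (by positivity)]
      linarith
    linarith
  rw [jsPlus, max_eq_right hc0, zero_smul, zero_add]
  exact h2

/-- Pitman-closeness comparison of the truncated vs. untruncated
James–Stein estimator: `Pr[‖δ̂⁺_JS - δ‖ < ‖X - δ‖] ≥ Pr[‖δ̂_JS - δ‖ < ‖X - δ‖]`, with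
strict inequality whenever `Pr[X ∈ (B₁ \ B₂) \ D] > 0`. -/
theorem reverse_stein_stmt14 {p : ℕ} (hp : 3 ≤ p) (σ : ℝ) (hσ : 0 < σ)
    {Ω : Type*} [MeasureSpace Ω] [IsProbabilityMeasure (ℙ : Measure Ω)]
    (X : Ω → EuclideanSpace ℝ (Fin p)) (hX : Measurable X)
    (habs : Measure.map X (ℙ : Measure Ω) ≪ volume)
    (δ δ₀ : EuclideanSpace ℝ (Fin p)) (hne : δ₀ ≠ δ) :
    (ℙ : Measure Ω) {ω | ‖jsEst σ (X ω) δ₀ - δ‖ < ‖X ω - δ‖}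
        ≤ (ℙ : Measure Ω) {ω | ‖jsPlus σ (X ω) δ₀ - δ‖ < ‖X ω - δ‖} ∧
    (0 < (ℙ : Measure Ω) {ω | X ω ∈
          (ball δ₀ (σ * Real.sqrt ((p : ℝ) - 2)) \ closedBall δ ‖δ₀ - δ‖)
            \ {x | ‖jsEst σ x δ₀ - δ‖ < ‖x - δ‖}} →
      (ℙ : Measure Ω) {ω | ‖jsEst σ (X ω) δ₀ - δ‖ < ‖X ω - δ‖}
        < (ℙ : Measure Ω) {ω | ‖jsPlus σ (X ω) δ₀ - δ‖ < ‖X ω - δ‖}) := by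
  set S : Set (EuclideanSpace ℝ (Fin p)) := {x | ‖jsEst σ x δ₀ - δ‖ < ‖x - δ‖} with hSdef
  set T : Set (EuclideanSpace ℝ (Fin p)) := {x | ‖jsPlus σ x δ₀ - δ‖ < ‖x - δ‖} with hTdef
  have hST : S ⊆ T := fun x hx => key_incl σ x δ δ₀ hx
  have hSmeas : MeasurableSet S := by
    apply measurableSet_lt
    · apply Measurable.norm
      apply Measurable.sub _ measurable_const
      apply Measurable.add _ measurable_const
      apply Measurable.fun_smul _ (measurable_id.sub measurable_const)
      apply Measurable.sub measurable_const
      apply Measurable.div measurable_const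
      exact ((measurable_id.sub measurable_const).norm.pow measurable_const)
    · exact (measurable_id.sub measurable_const).norm
  set E : Set (EuclideanSpace ℝ (Fin p)) :=
    (ball δ₀ (σ * Real.sqrt ((p : ℝ) - 2)) \ closedBall δ ‖δ₀ - δ‖) \ S with hEdef
  have hET : E ⊆ T := fun x hx => ball_incl σ hσ hp x δ δ₀ hx.1
  have hEmeas : MeasurableSet E :=
    (measurableSet_ball.diff measurableSet_closedBall).diff hSmeas
  have hdisj : Disjoint (X ⁻¹' S) (X ⁻¹' E) := by
    rw [Set.disjoint_left]
    intro ω h1 h2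
    exact h2.2 h1
  have hES1 : {ω | ‖jsEst σ (X ω) δ₀ - δ‖ < ‖X ω - δ‖} = X ⁻¹' S := rfl
  have hES2 : {ω | ‖jsPlus σ (X ω) δ₀ - δ‖ < ‖X ω - δ‖} = X ⁻¹' T := rfl
  rw [hES1, hES2]
  constructor
  · exact measure_mono (Set.preimage_mono hST)
  · intro hpos
    have hposE : 0 < (ℙ : Measure Ω) (X ⁻¹' E) := hpos
    calc (ℙ : Measure Ω) (X ⁻¹' S)
        < (ℙ : Measure Ω) (X ⁻¹' S) + (ℙ : Measure Ω) (X ⁻¹' E) :=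
          ENNReal.lt_add_right (measure_ne_top _ _) hposE.ne'
      _ = (ℙ : Measure Ω) (X ⁻¹' S ∪ X ⁻¹' E) := (measure_union hdisj (hX hEmeas)).symm
      _ ≤ (ℙ : Measure Ω) (X ⁻¹' T) := by
          apply measure_mono
          rw [← Set.preimage_union]
          exact Set.preimage_mono (Set.union_subset hST hET)
end

section
/- Suppose for each p: δ₀ is random and independent of X, Y = X - δ is spherically symmetric and absolutely continuous, and ‖δ₀ - δ‖/‖X - δ‖ = o(p^{1/2}) in probability as p → ∞. Then Pr_δ[‖X - δ₀‖ > ‖δ - δ₀‖] → 1 as p → ∞. -/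
open MeasureTheory ProbabilityTheory Metric Filter
open scoped ENNReal Topology

open scoped RealInnerProductSpace

variable {p : ℕ}

lemma rs_meas_F (u : EuclideanSpace ℝ (Fin p)) :
    Measurable fun y : EuclideanSpace ℝ (Fin p) =>
      ENNReal.ofReal (⟪y, u⟫ ^ 2 / ‖y‖ ^ 2) := by
  apply ENNReal.measurable_ofReal.comp
  exact (((continuous_id.inner continuous_const).pow 2).measurable).div
    ((continuous_norm.pow 2).measurable)

lemma rs_inv_lintegral (μ : Measure (EuclideanSpace ℝ (Fin p)))
    (hinv : ∀ g : EuclideanSpace ℝ (Fin p) ≃ₗᵢ[ℝ] EuclideanSpace ℝ (Fin p),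
      Measure.map g μ = μ)
    {f : EuclideanSpace ℝ (Fin p) → ℝ≥0∞} (hf : Measurable f)
    (g : EuclideanSpace ℝ (Fin p) ≃ₗᵢ[ℝ] EuclideanSpace ℝ (Fin p)) :
    ∫⁻ y, f (g y) ∂μ = ∫⁻ y, f y ∂μ := by
  conv_rhs => rw [← hinv g]
  rw [lintegral_map hf g.continuous.measurable]

lemma rs_swap_int (μ : Measure (EuclideanSpace ℝ (Fin p)))
    (hinv : ∀ g : EuclideanSpace ℝ (Fin p) ≃ₗᵢ[ℝ] EuclideanSpace ℝ (Fin p),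
      Measure.map g μ = μ)
    {u v : EuclideanSpace ℝ (Fin p)} (hu : ‖u‖ = 1) (hv : ‖v‖ = 1) :
    ∫⁻ y, ENNReal.ofReal (⟪y, u⟫ ^ 2 / ‖y‖ ^ 2) ∂μ
      = ∫⁻ y, ENNReal.ofReal (⟪y, v⟫ ^ 2 / ‖y‖ ^ 2) ∂μ := by
  obtain ⟨g, hg⟩ : ∃ g : EuclideanSpace ℝ (Fin p) ≃ₗᵢ[ℝ] EuclideanSpace ℝ (Fin p),
      g u = v := by
    rcases eq_or_ne u v with rfl | huv
    · exact ⟨LinearIsometryEquiv.refl ℝ _, rfl⟩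
    · exact ⟨Submodule.reflection (ℝ ∙ (u - v))ᗮ, Submodule.reflection_sub (by rw [hu, hv])⟩
  have key : ∀ y, ENNReal.ofReal (⟪y, u⟫ ^ 2 / ‖y‖ ^ 2)
      = ENNReal.ofReal (⟪g y, v⟫ ^ 2 / ‖g y‖ ^ 2) := by
    intro y
    rw [← hg, LinearIsometryEquiv.inner_map_map, LinearIsometryEquiv.norm_map]
  simp_rw [key]
  exact rs_inv_lintegral μ hinv (rs_meas_F v) g

lemma rs_null_zero (hp : 0 < p) (μ : Measure (EuclideanSpace ℝ (Fin p)))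
    (hac : μ ≪ volume) : μ {0} = 0 := by
  haveI : Nonempty (Fin p) := ⟨⟨0, hp⟩⟩
  haveI : Nontrivial (EuclideanSpace ℝ (Fin p)) := by
    infer_instance
  exact hac (measure_singleton 0)

lemma rs_unit_int (hp : 0 < p) (μ : Measure (EuclideanSpace ℝ (Fin p)))
    [IsProbabilityMeasure μ]
    (hinv : ∀ g : EuclideanSpace ℝ (Fin p) ≃ₗᵢ[ℝ] EuclideanSpace ℝ (Fin p),
      Measure.map g μ = μ)
    (hac : μ ≪ volume)
    {u : EuclideanSpace ℝ (Fin p)} (hu : ‖u‖ = 1) :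
    ∫⁻ y, ENNReal.ofReal (⟪y, u⟫ ^ 2 / ‖y‖ ^ 2) ∂μ = (p : ℝ≥0∞)⁻¹ := by
  set I : ℝ≥0∞ := ∫⁻ y, ENNReal.ofReal (⟪y, u⟫ ^ 2 / ‖y‖ ^ 2) ∂μ with hI
  have he : ∀ i : Fin p, ‖(EuclideanSpace.single i (1:ℝ))‖ = 1 := by
    intro i; simp
  have hsum : (p : ℝ≥0∞) * I = 1 := by
    have h1 : ∀ i : Fin p,
        ∫⁻ y, ENNReal.ofReal (⟪y, EuclideanSpace.single i (1:ℝ)⟫ ^ 2 / ‖y‖ ^ 2) ∂μ = I :=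
      fun i => rs_swap_int μ hinv (he i) hu
    have h2 : ∑ i : Fin p,
        ∫⁻ y, ENNReal.ofReal (⟪y, EuclideanSpace.single i (1:ℝ)⟫ ^ 2 / ‖y‖ ^ 2) ∂μ
        = (p : ℝ≥0∞) * I := by
      rw [Finset.sum_congr rfl (fun i _ => h1 i), Finset.sum_const]
      simp [nsmul_eq_mul]
    rw [← h2, ← lintegral_finset_sum _ (fun i _ => rs_meas_F _)]
    have hae : ∀ᵐ y ∂μ, (∑ i : Fin p,
        ENNReal.ofReal (⟪y, EuclideanSpace.single i (1:ℝ)⟫ ^ 2 / ‖y‖ ^ 2)) = 1 := by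
      have h0 : μ {0} = 0 := rs_null_zero hp μ hac
      filter_upwards [measure_eq_zero_iff_ae_notMem.mp h0] with y hy
      have hynorm : (0:ℝ) < ‖y‖ ^ 2 := by
        have : y ≠ 0 := by simpa using hy
        exact pow_pos (norm_pos_iff.mpr this) 2
      have hx : ∀ i : Fin p, ⟪y, EuclideanSpace.single i (1:ℝ)⟫ = y i := by
        intro i; rw [EuclideanSpace.inner_single_right]; simp
      simp_rw [hx]
      rw [← ENNReal.ofReal_sum_of_nonneg (fun i _ => by positivity)]
      have : ∑ i : Fin p, y i ^ 2 / ‖y‖ ^ 2 = 1 := by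
        rw [← Finset.sum_div]
        rw [div_eq_one_iff_eq (ne_of_gt hynorm)]
        rw [EuclideanSpace.norm_eq]
        rw [Real.sq_sqrt (by positivity)]
        simp [Real.norm_eq_abs, sq_abs]
      rw [this, ENNReal.ofReal_one]
    rw [lintegral_congr_ae hae]
    simp
  have hpne : (p : ℝ≥0∞) ≠ 0 := Nat.cast_ne_zero.mpr hp.ne'
  calc I = (↑p)⁻¹ * (↑p * I) := by
        rw [← mul_assoc, ENNReal.inv_mul_cancel hpne (by simp), one_mul]
    _ = (↑p)⁻¹ := by rw [hsum, mul_one]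

noncomputable def rsF (d y : EuclideanSpace ℝ (Fin p)) : ℝ≥0∞ :=
  ENNReal.ofReal (⟪y, d⟫ ^ 2 / (‖y‖ ^ 2 * ‖d‖ ^ 2))

lemma rsF_meas : Measurable fun z : EuclideanSpace ℝ (Fin p) × EuclideanSpace ℝ (Fin p) =>
    rsF z.1 z.2 := by
  apply ENNReal.measurable_ofReal.comp
  exact (((continuous_snd.inner continuous_fst).pow 2).measurable).div
    (((continuous_snd.norm.pow 2).mul (continuous_fst.norm.pow 2)).measurable)

lemma rs_d_int (hp : 0 < p) (μ : Measure (EuclideanSpace ℝ (Fin p)))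
    [IsProbabilityMeasure μ]
    (hinv : ∀ g : EuclideanSpace ℝ (Fin p) ≃ₗᵢ[ℝ] EuclideanSpace ℝ (Fin p),
      Measure.map g μ = μ)
    (hac : μ ≪ volume) (d : EuclideanSpace ℝ (Fin p)) :
    ∫⁻ y, rsF d y ∂μ ≤ (p : ℝ≥0∞)⁻¹ := by
  rcases eq_or_ne d 0 with rfl | hd
  · simp [rsF]
  · set u : EuclideanSpace ℝ (Fin p) := ‖d‖⁻¹ • d with hu
    have hdn : (0:ℝ) < ‖d‖ := norm_pos_iff.mpr hd
    have hunorm : ‖u‖ = 1 := by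
      rw [hu, norm_smul, norm_inv, norm_norm, inv_mul_cancel₀ hdn.ne']
    have heq : ∀ y : EuclideanSpace ℝ (Fin p),
        rsF d y = ENNReal.ofReal (⟪y, u⟫ ^ 2 / ‖y‖ ^ 2) := by
      intro y
      rw [rsF, hu, real_inner_smul_right]
      congr 1
      field_simp
    simp_rw [heq]
    rw [rs_unit_int hp μ hinv hac hunorm]

lemma rs_prod_int (hp : 0 < p) (μ ν : Measure (EuclideanSpace ℝ (Fin p)))
    [IsProbabilityMeasure μ] [IsProbabilityMeasure ν]
    (hinv : ∀ g : EuclideanSpace ℝ (Fin p) ≃ₗᵢ[ℝ] EuclideanSpace ℝ (Fin p),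
      Measure.map g μ = μ)
    (hac : μ ≪ volume) :
    ∫⁻ z, rsF z.1 z.2 ∂(ν.prod μ) ≤ (p : ℝ≥0∞)⁻¹ := by
  rw [lintegral_prod _ rsF_meas.aemeasurable]
  calc ∫⁻ d, ∫⁻ y, rsF d y ∂μ ∂ν ≤ ∫⁻ _, (p : ℝ≥0∞)⁻¹ ∂ν :=
        lintegral_mono fun d => rs_d_int hp μ hinv hac d
    _ = (p : ℝ≥0∞)⁻¹ := by simp

set_option maxHeartbeats 1000000 in
lemma rs_key (hp : 0 < p) {Ω : Type*} [MeasureSpace Ω] [IsProbabilityMeasure (ℙ : Measure Ω)]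
    (X δ₀ : Ω → EuclideanSpace ℝ (Fin p)) (δ : EuclideanSpace ℝ (Fin p))
    (hmX : Measurable X) (hmδ₀ : Measurable δ₀)
    (hindep : IndepFun δ₀ X ℙ)
    (hsph : ∀ g : EuclideanSpace ℝ (Fin p) ≃ₗᵢ[ℝ] EuclideanSpace ℝ (Fin p),
      Measure.map (fun ω => g (X ω - δ)) (ℙ : Measure Ω)
        = Measure.map (fun ω => X ω - δ) (ℙ : Measure Ω))
    (habs : Measure.map (fun ω => X ω - δ) (ℙ : Measure Ω) ≪ volume)
    {ε : ℝ} (hε : 0 < ε) :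
    (ℙ : Measure Ω) ({ω | ‖δ - δ₀ ω‖ < ‖X ω - δ₀ ω‖}ᶜ)
      ≤ (ℙ : Measure Ω) {ω | ε * Real.sqrt p ≤ ‖δ₀ ω - δ‖ / ‖X ω - δ‖}
        + ENNReal.ofReal (4 * ε ^ 2) := by
  set Y : Ω → EuclideanSpace ℝ (Fin p) := fun ω => X ω - δ with hYdef
  set D : Ω → EuclideanSpace ℝ (Fin p) := fun ω => δ₀ ω - δ with hDdef
  have hY : Measurable Y := hmX.sub measurable_const
  have hD : Measurable D := hmδ₀.sub measurable_const
  set μ : Measure (EuclideanSpace ℝ (Fin p)) := Measure.map Y ℙ with hμdef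
  set ν : Measure (EuclideanSpace ℝ (Fin p)) := Measure.map D ℙ with hνdef
  haveI : IsProbabilityMeasure μ := Measure.isProbabilityMeasure_map hY.aemeasurable
  haveI : IsProbabilityMeasure ν := Measure.isProbabilityMeasure_map hD.aemeasurable
  have hinv : ∀ g : EuclideanSpace ℝ (Fin p) ≃ₗᵢ[ℝ] EuclideanSpace ℝ (Fin p),
      Measure.map g μ = μ := by
    intro g
    rw [hμdef, Measure.map_map g.continuous.measurable hY]
    exact hsph g
  -- independence and product formula
  have hindep2 : IndepFun D Y ℙ :=
    hindep.comp (measurable_id.sub measurable_const) (measurable_id.sub measurable_const)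
  have hprod : Measure.map (fun ω => (D ω, Y ω)) (ℙ : Measure Ω) = ν.prod μ :=
    (indepFun_iff_map_prod_eq_prod_map_map hD.aemeasurable hY.aemeasurable).mp hindep2
  -- the integral bound
  have hint : ∫⁻ ω, rsF (D ω) (Y ω) ∂(ℙ : Measure Ω) ≤ (p : ℝ≥0∞)⁻¹ := by
    have : ∫⁻ ω, rsF (D ω) (Y ω) ∂(ℙ : Measure Ω)
        = ∫⁻ z, rsF z.1 z.2 ∂(ν.prod μ) := by
      rw [← hprod, lintegral_map rsF_meas (hD.prodMk hY)]
    rw [this]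
    exact rs_prod_int hp μ ν hinv habs
  -- Markov
  set a : ℝ≥0∞ := ENNReal.ofReal (1 / (4 * ε ^ 2 * p)) with hadef
  have hapos : (0:ℝ) < 1 / (4 * ε ^ 2 * p) := by positivity
  have ha0 : a ≠ 0 := by
    rw [hadef]; exact (ENNReal.ofReal_pos.mpr hapos).ne'
  have hG : Measurable fun ω => rsF (D ω) (Y ω) := by
    exact Measurable.comp (f := fun ω => (D ω, Y ω)) rsF_meas (hD.prodMk hY)
  have hMarkov : (ℙ : Measure Ω) {ω | a ≤ rsF (D ω) (Y ω)} ≤ ENNReal.ofReal (4 * ε ^ 2) := by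
    calc (ℙ : Measure Ω) {ω | a ≤ rsF (D ω) (Y ω)}
        ≤ (∫⁻ ω, rsF (D ω) (Y ω) ∂(ℙ : Measure Ω)) / a :=
          meas_ge_le_lintegral_div hG.aemeasurable ha0 ENNReal.ofReal_ne_top
      _ ≤ (p : ℝ≥0∞)⁻¹ / a := ENNReal.div_le_div_right hint a
      _ = ENNReal.ofReal (4 * ε ^ 2) := by
          rw [hadef, div_eq_mul_inv, ← ENNReal.ofReal_inv_of_pos hapos]
          have hpR : (0:ℝ) < (p:ℝ) := by exact_mod_cast hp
          have : ((p : ℝ≥0∞))⁻¹ = ENNReal.ofReal ((p:ℝ)⁻¹) := by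
            rw [ENNReal.ofReal_inv_of_pos hpR, ENNReal.ofReal_natCast]
          rw [this, ← ENNReal.ofReal_mul (by positivity)]
          congr 1
          field_simp
  -- set inclusion
  have hsub : ({ω | ‖δ - δ₀ ω‖ < ‖X ω - δ₀ ω‖}ᶜ : Set Ω)
      ⊆ (Y ⁻¹' {0}) ∪ ({ω | ε * Real.sqrt p ≤ ‖δ₀ ω - δ‖ / ‖X ω - δ‖}
        ∪ {ω | a ≤ rsF (D ω) (Y ω)}) := by
    intro ω hω
    simp only [Set.mem_compl_iff, Set.mem_setOf_eq, not_lt] at hω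
    have hXD : X ω - δ₀ ω = Y ω - D ω := by
      exact (sub_sub_sub_cancel_right _ _ _).symm
    have hδD : ‖δ - δ₀ ω‖ = ‖D ω‖ := by
      rw [hDdef, norm_sub_rev]
    rw [hXD, hδD] at hω
    by_cases hY0 : Y ω = 0
    · exact Or.inl hY0
    right
    have hYpos : (0:ℝ) < ‖Y ω‖ := norm_pos_iff.mpr hY0
    have hsq : ‖Y ω - D ω‖ ^ 2 ≤ ‖D ω‖ ^ 2 :=
      pow_le_pow_left₀ (norm_nonneg _) hω 2
    rw [norm_sub_sq_real] at hsq
    have hinner : ‖Y ω‖ ^ 2 ≤ 2 * ⟪Y ω, D ω⟫ := by linarith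
    by_cases hB : ε * Real.sqrt p ≤ ‖δ₀ ω - δ‖ / ‖X ω - δ‖
    · exact Or.inl hB
    right
    push_neg at hB
    have hBY : ‖D ω‖ / ‖Y ω‖ < ε * Real.sqrt p := hB
    have hDb : ‖D ω‖ < ε * Real.sqrt p * ‖Y ω‖ := by
      rw [div_lt_iff₀ hYpos] at hBY
      linarith
    have hDpos : (0:ℝ) < ‖D ω‖ := by
      by_contra h
      push_neg at h
      have : ‖D ω‖ = 0 := le_antisymm h (norm_nonneg _)
      have hD0 : D ω = 0 := norm_eq_zero.mp this
      rw [hD0, inner_zero_right] at hinner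
      nlinarith
    have hsqrtp : Real.sqrt p ^ 2 = p := Real.sq_sqrt (by positivity)
    have hD2 : ‖D ω‖ ^ 2 < ε ^ 2 * p * ‖Y ω‖ ^ 2 := by
      have h := mul_self_lt_mul_self (norm_nonneg (D ω)) hDb
      have expand : (ε * Real.sqrt p * ‖Y ω‖) * (ε * Real.sqrt p * ‖Y ω‖)
          = ε ^ 2 * (Real.sqrt p ^ 2) * ‖Y ω‖ ^ 2 := by ring
      rw [expand, hsqrtp, ← pow_two] at h
      exact h
    have hfinal : 1 / (4 * ε ^ 2 * p) ≤ ⟪Y ω, D ω⟫ ^ 2 / (‖Y ω‖ ^ 2 * ‖D ω‖ ^ 2) := by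
      have hpR : (0:ℝ) < (p:ℝ) := by exact_mod_cast hp
      rw [div_le_div_iff₀ (by positivity) (by positivity)]
      nlinarith [mul_le_mul_of_nonneg_left hD2.le (sq_nonneg ‖Y ω‖),
        mul_le_mul_of_nonneg_left (pow_le_pow_left₀ (sq_nonneg ‖Y ω‖) hinner 2)
          (by positivity : (0:ℝ) ≤ ε ^ 2 * (p:ℝ))]
    show a ≤ rsF (D ω) (Y ω)
    rw [hadef, rsF]
    exact ENNReal.ofReal_le_ofReal hfinal
  -- combine
  have hN : (ℙ : Measure Ω) (Y ⁻¹' {0}) = 0 := by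
    rw [Measure.map_apply hY (measurableSet_singleton 0) |>.symm]
    exact rs_null_zero hp μ habs
  calc (ℙ : Measure Ω) ({ω | ‖δ - δ₀ ω‖ < ‖X ω - δ₀ ω‖}ᶜ)
      ≤ (ℙ : Measure Ω) ((Y ⁻¹' {0}) ∪ ({ω | ε * Real.sqrt p ≤ ‖δ₀ ω - δ‖ / ‖X ω - δ‖}
          ∪ {ω | a ≤ rsF (D ω) (Y ω)})) := measure_mono hsub
    _ ≤ (ℙ : Measure Ω) (Y ⁻¹' {0}) + ((ℙ : Measure Ω) {ω | ε * Real.sqrt p ≤ ‖δ₀ ω - δ‖ / ‖X ω - δ‖}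
          + (ℙ : Measure Ω) {ω | a ≤ rsF (D ω) (Y ω)}) :=
        le_trans (measure_union_le _ _) (by gcongr; exact measure_union_le _ _)
    _ ≤ 0 + ((ℙ : Measure Ω) {ω | ε * Real.sqrt p ≤ ‖δ₀ ω - δ‖ / ‖X ω - δ‖}
          + ENNReal.ofReal (4 * ε ^ 2)) := by
        rw [hN]; gcongr
    _ = (ℙ : Measure Ω) {ω | ε * Real.sqrt p ≤ ‖δ₀ ω - δ‖ / ‖X ω - δ‖}
          + ENNReal.ofReal (4 * ε ^ 2) := by rw [zero_add]

/-- If for each `p` the target `δ₀` is independent of `X`,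
`Y = X - δ` is spherically symmetric and absolutely continuous, and
`‖δ₀ - δ‖/‖X - δ‖ = o(p^{1/2})` in probability, then
`Pr[‖X - δ₀‖ > ‖δ - δ₀‖] → 1` as `p → ∞`. -/
theorem reverse_stein_stmt18
    (Ω : ℕ → Type*) [∀ p, MeasureSpace (Ω p)]
    [∀ p, IsProbabilityMeasure (ℙ : Measure (Ω p))]
    (X δ₀ : ∀ p, Ω p → EuclideanSpace ℝ (Fin p))
    (δ : ∀ p, EuclideanSpace ℝ (Fin p))
    (hmX : ∀ p, Measurable (X p)) (hmδ₀ : ∀ p, Measurable (δ₀ p))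
    (hindep : ∀ p, IndepFun (δ₀ p) (X p) (ℙ : Measure (Ω p)))
    (hsph : ∀ p, ∀ g : EuclideanSpace ℝ (Fin p) ≃ₗᵢ[ℝ] EuclideanSpace ℝ (Fin p),
      Measure.map (fun ω => g (X p ω - δ p)) (ℙ : Measure (Ω p))
        = Measure.map (fun ω => X p ω - δ p) (ℙ : Measure (Ω p)))
    (habs : ∀ p, Measure.map (fun ω => X p ω - δ p) (ℙ : Measure (Ω p)) ≪ volume)
    (hsmall : ∀ ε : ℝ, 0 < ε →
      Tendsto (fun p => (ℙ : Measure (Ω p))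
          {ω | ε * Real.sqrt p ≤ ‖δ₀ p ω - δ p‖ / ‖X p ω - δ p‖})
        atTop (𝓝 0)) :
    Tendsto (fun p => (ℙ : Measure (Ω p))
        {ω | ‖δ p - δ₀ p ω‖ < ‖X p ω - δ₀ p ω‖}) atTop (𝓝 1) := by
  set E : ∀ p, Set (Ω p) := fun p => {ω | ‖δ p - δ₀ p ω‖ < ‖X p ω - δ₀ p ω‖} with hEdef
  have hEmeas : ∀ p, MeasurableSet (E p) := by
    intro p
    exact measurableSet_lt ((measurable_const.sub (hmδ₀ p)).norm)
      (((hmX p).sub (hmδ₀ p)).norm)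
  set c : ℕ → ℝ≥0∞ := fun p => (ℙ : Measure (Ω p)) (E p)ᶜ with hcdef
  have hc : Tendsto c atTop (𝓝 0) := by
    rw [ENNReal.tendsto_atTop_zero]
    intro η hη
    set η' : ℝ≥0∞ := min η 1 with hη'def
    have hη'pos : 0 < η' := lt_min hη zero_lt_one
    have hη'top : η' ≠ ⊤ := by
      simp only [hη'def, ne_eq, min_eq_top, not_and]
      intro; exact ENNReal.one_ne_top
    set r : ℝ := η'.toReal with hrdef
    have hrpos : 0 < r := ENNReal.toReal_pos hη'pos.ne' hη'top
    set ε : ℝ := Real.sqrt (r / 8) with hεdef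
    have hεpos : 0 < ε := Real.sqrt_pos.mpr (by positivity)
    have h4ε : ENNReal.ofReal (4 * ε ^ 2) = η' / 2 := by
      rw [hεdef, Real.sq_sqrt (by positivity)]
      have : 4 * (r / 8) = r / 2 := by ring
      rw [this, ENNReal.ofReal_div_of_pos (by norm_num), ENNReal.ofReal_ofNat,
        hrdef, ENNReal.ofReal_toReal hη'top]
    obtain ⟨N₁, hN₁⟩ := ENNReal.tendsto_atTop_zero.mp (hsmall ε hεpos) (η' / 2)
      (ENNReal.half_pos hη'pos.ne')
    refine ⟨max N₁ 1, fun p hp => ?_⟩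
    have hp1 : 0 < p := lt_of_lt_of_le Nat.one_pos (le_trans (le_max_right N₁ 1) hp)
    have hbp := hN₁ p (le_trans (le_max_left N₁ 1) hp)
    calc c p ≤ (ℙ : Measure (Ω p))
          {ω | ε * Real.sqrt p ≤ ‖δ₀ p ω - δ p‖ / ‖X p ω - δ p‖}
          + ENNReal.ofReal (4 * ε ^ 2) :=
        rs_key hp1 (X p) (δ₀ p) (δ p) (hmX p) (hmδ₀ p) (hindep p) (hsph p) (habs p) hεpos
      _ ≤ η' / 2 + η' / 2 := by rw [h4ε]; gcongr
      _ = η' := ENNReal.add_halves η'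
      _ ≤ η := min_le_left _ _
  have heq : ∀ p, (ℙ : Measure (Ω p)) (E p) = 1 - c p := by
    intro p
    rw [hcdef]
    rw [← compl_compl (E p)]
    exact prob_compl_eq_one_sub (hEmeas p).compl
  have : Tendsto (fun p => (1 : ℝ≥0∞) - c p) atTop (𝓝 1) := by
    have h := ENNReal.Tendsto.sub (tendsto_const_nhds (x := (1:ℝ≥0∞)) (f := atTop)) hc
      (Or.inl ENNReal.one_ne_top)
    simpa using h
  exact this.congr fun p => (heq p).symm
end
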